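/- Let A be a nonzero d1×d2 matrix with nonnegative entries satisfying hypothesis (H), and let B be a d2×d3 matrix with nonnegative entries such that AB ≠ 0. Then δ(AB) ≤ δ(A)·τ(B). -/

import Mathlib

open Matrix Filter Finset Topology
open scoped ENNReal Classical

/-- Hypothesis (H): the nonzero entries of `A` form a nonempty rectangular block
`I_A × J_A`. -/
def satH {d1 d2 : ℕ} (A : Matrix (Fin d1) (Fin d2) ℝ) : Prop :=
  ∃ (I : Set (Fin d1)) (J : Set (Fin d2)), I.Nonempty ∧ J.Nonempty ∧
    ∀ i j, A i j ≠ 0 ↔ i ∈ I ∧ j ∈ J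

/-- The δ-coefficient of a matrix: `sup` of `log((A i j · A k l)/(A k j · A i l))` over
indices in the nonzero block if (H) holds, `+∞` otherwise. -/
noncomputable def deltaC {d1 d2 : ℕ} (A : Matrix (Fin d1) (Fin d2) ℝ) : ℝ≥0∞ :=
  if satH A then
    ENNReal.ofReal (sSup {x | ∃ i k j l, A i j ≠ 0 ∧ A k j ≠ 0 ∧ A i l ≠ 0 ∧ A k l ≠ 0 ∧
      x = Real.log (A i j * A k l / (A k j * A i l))})
  else ⊤

/-- The generalized contraction coefficient `τ(A) = tanh(δ(A)/4)`, equal to `1`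
when `δ(A) = +∞`. -/
noncomputable def tauC {d1 d2 : ℕ} (A : Matrix (Fin d1) (Fin d2) ℝ) : ℝ :=
  if deltaC A = ⊤ then 1 else Real.tanh ((deltaC A).toReal / 4)

section AuxiliaryLemmas
open Real

lemma tanh_sum_le (u w : ℝ) (hu : 0 ≤ u) : tanh (u+w) + tanh (u-w) ≤ 2 * tanh u := by
  have hca := cosh_pos (u+w)
  have hcb := cosh_pos (u-w)
  have hcu := cosh_pos u
  have hnum : sinh (2*u) = sinh (u+w) * cosh (u-w) + cosh (u+w) * sinh (u-w) := by
    rw [show (2:ℝ)*u = (u+w)+(u-w) by ring, sinh_add]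
  have h1 : tanh (u+w) + tanh (u-w) = sinh (2*u) / (cosh (u+w) * cosh (u-w)) := by
    rw [tanh_eq_sinh_div_cosh, tanh_eq_sinh_div_cosh,
      div_add_div _ _ hca.ne' hcb.ne', hnum]
  have h2 : 2*tanh u = sinh (2*u) / (cosh u^2) := by
    rw [tanh_eq_sinh_div_cosh, sinh_two_mul]
    field_simp
  have hden : cosh u^2 ≤ cosh (u+w) * cosh (u-w) := by
    rw [cosh_add, cosh_sub]
    nlinarith [cosh_sq u, cosh_sq w, sq_nonneg (sinh w)]
  have hs : 0 ≤ sinh (2*u) := by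
    have := Real.sinh_le_sinh.2 (by linarith : (0:ℝ) ≤ 2*u)
    rwa [sinh_zero] at this
  rw [h1, h2]
  gcongr

lemma log_cosh_le (u w : ℝ) (hu : 0 ≤ u) (hw : 0 ≤ w) :
    log (cosh (u+w)) ≤ 2*w*tanh u + log (cosh (u-w)) := by
  set F : ℝ → ℝ := fun x => (2*tanh u)*x + (log (cosh (u-x)) - log (cosh (u+x))) with hF
  have hder : ∀ x : ℝ, HasDerivAt F (2*tanh u - tanh (u-x) - tanh (u+x)) x := by
    intro x
    have h1 : HasDerivAt (fun y : ℝ => u - y) (-1) x := (hasDerivAt_id x).const_sub u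
    have h2 : HasDerivAt (fun y : ℝ => u + y) 1 x := by
      simpa using (hasDerivAt_id x).const_add u
    have h3 : HasDerivAt (fun y : ℝ => log (cosh (u-y))) (sinh (u-x) * (-1) / cosh (u-x)) x :=
      (((Real.hasDerivAt_cosh (u-x)).comp x h1).log (cosh_pos _).ne')
    have h4 : HasDerivAt (fun y : ℝ => log (cosh (u+y))) (sinh (u+x) * 1 / cosh (u+x)) x :=
      (((Real.hasDerivAt_cosh (u+x)).comp x h2).log (cosh_pos _).ne')
    have h5 : HasDerivAt (fun y : ℝ => (2*tanh u)*y) (2*tanh u) x := by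
      simpa using (hasDerivAt_id x).const_mul (2*tanh u)
    have := h5.add (h3.sub h4)
    refine this.congr_deriv ?_
    simp only [tanh_eq_sinh_div_cosh]
    ring
  have hmono : MonotoneOn F (Set.Ici (0:ℝ)) := by
    apply monotoneOn_of_deriv_nonneg (convex_Ici 0)
    · exact Continuous.continuousOn (by
        have : Continuous F := by
          apply Continuous.add
          · exact (continuous_const.mul continuous_id)
          · exact ((Real.continuous_cosh.comp (continuous_const.sub continuous_id)).log
              (fun x => (cosh_pos _).ne')).sub
              ((Real.continuous_cosh.comp (continuous_const.add continuous_id)).log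
              (fun x => (cosh_pos _).ne'))
        exact this)
    · intro x hx
      exact (hder x).differentiableAt.differentiableWithinAt
    · intro x hx
      rw [(hder x).deriv]
      have := tanh_sum_le u x hu
      linarith
  have h0 : F 0 = 0 := by simp [hF]
  have := hmono (Set.self_mem_Ici) (Set.mem_Ici.2 hw) hw
  rw [h0] at this
  simp only [hF] at this
  linarith

lemma tanh_nonneg' (u : ℝ) (hu : 0 ≤ u) : 0 ≤ tanh u := by
  rw [tanh_eq_sinh_div_cosh]
  apply div_nonneg _ (cosh_pos u).le
  have := Real.sinh_le_sinh.2 hu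
  rwa [sinh_zero] at this

lemma coeff_ineq (lam Δ D : ℝ) (hΔ : 0 ≤ Δ) (hD : 0 ≤ D) (hlam1 : 1 ≤ lam)
    (hlamD : lam ≤ exp D) :
    lam * exp Δ + 1 + 2*Real.sqrt (lam*exp Δ) ≤
      exp (D * tanh (Δ/4)) * (exp Δ + lam + 2*Real.sqrt (lam*exp Δ)) := by
  have hlampos : (0:ℝ) < lam := by linarith
  set u := Δ/4 with hu'
  set w := Real.log lam / 4 with hw'
  have hu : 0 ≤ u := by positivity
  have hw : 0 ≤ w := by
    have := Real.log_nonneg hlam1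
    positivity
  have h4w : 4*w ≤ D := by
    have : Real.log lam ≤ D := (Real.log_le_iff_le_exp hlampos).2 hlamD
    rw [hw']; linarith
  set a := exp u with ha'
  set b := exp w with hb'
  have hapos : 0 < a := Real.exp_pos u
  have hbpos : 0 < b := Real.exp_pos w
  have hlam4 : lam = b^4 := by
    rw [hb', ← Real.exp_nat_mul]
    rw [show ((4:ℕ):ℝ)*w = Real.log lam by push_cast; rw [hw']; ring]
    rw [Real.exp_log hlampos]
  have hΔ4 : exp Δ = a^4 := by
    rw [ha', ← Real.exp_nat_mul]
    rw [show ((4:ℕ):ℝ)*u = Δ by push_cast; rw [hu']; ring]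
  have hsqrt : Real.sqrt (lam * exp Δ) = a^2*b^2 := by
    rw [hlam4, hΔ4, show b^4*a^4 = (a^2*b^2)^2 by ring, Real.sqrt_sq (by positivity)]
  have hkey : cosh (u+w) ≤ exp (2*w*tanh u) * cosh (u-w) := by
    have h := Real.exp_le_exp.2 (log_cosh_le u w hu hw)
    rwa [Real.exp_add, Real.exp_log (cosh_pos _), Real.exp_log (cosh_pos _)] at h
  set E := exp (2*w*tanh u) with hE'
  have hEpos : 0 < E := Real.exp_pos _
  have key2 : a^2*b^2 + 1 ≤ E * (a^2 + b^2) := by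
    rw [Real.cosh_eq, Real.cosh_eq] at hkey
    have e1 : exp (u+w) = a*b := Real.exp_add u w
    have e2 : exp (-(u+w)) = (a*b)⁻¹ := by rw [Real.exp_neg, e1]
    have e3 : exp (u-w) = a*b⁻¹ := by rw [Real.exp_sub, div_eq_mul_inv]
    have e4 : exp (-(u-w)) = b*a⁻¹ := by
      rw [show -(u-w) = w - u by ring, Real.exp_sub, div_eq_mul_inv]
    rw [e1, e2, e3, e4] at hkey
    have h2 := mul_le_mul_of_nonneg_left hkey (by positivity : (0:ℝ) ≤ 2*a*b)
    have eL : 2*a*b*((a*b+(a*b)⁻¹)/2) = a^2*b^2+1 := by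
      field_simp
    have eR : 2*a*b*(E*((a*b⁻¹+b*a⁻¹)/2)) = E*(a^2+b^2) := by
      field_simp
    linarith [h2]
  have hE2 : E^2 ≤ exp (D * tanh u) := by
    rw [hE', ← Real.exp_nat_mul]
    apply Real.exp_le_exp.2
    push_cast
    have := tanh_nonneg' u hu
    nlinarith
  have sq1 : (a^2*b^2+1)^2 ≤ (E*(a^2+b^2))^2 :=
    pow_le_pow_left₀ (by positivity) key2 2
  have hfin : E^2*(a^2+b^2)^2 ≤ exp (D*tanh u)*(a^2+b^2)^2 :=
    mul_le_mul_of_nonneg_right hE2 (by positivity)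
  rw [hsqrt, hlam4, hΔ4]
  nlinarith [sq1, hfin]

lemma scalar_ineq (lam C K p q : ℝ) (hlam : 1 ≤ lam) (hC : 1 ≤ C) (hp : 0 < p)
    (hq : 0 < q) (hpq : p ≤ C*q) (hK1 : 1 ≤ K)
    (hK2 : lam*C + 1 + 2*Real.sqrt (lam*C) ≤ K*(C + lam + 2*Real.sqrt (lam*C))) :
    (lam*p+1)*(q+1) ≤ K*((p+1)*(lam*q+1)) := by
  have hS : Real.sqrt (lam*C) ^ 2 = lam*C := Real.sq_sqrt (by positivity)
  set S := Real.sqrt (lam*C) with hS'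
  have key : K*((C*q+1)*(lam*q+1)) - (lam*C*q+1)*(q+1) =
      (K-1)*(S*q-1)^2 + q*(K*(C+lam+2*S) - (lam*C+1+2*S)) := by
    linear_combination (1-K)*q^2*hS
  have P1 : 0 ≤ (K-1)*(S*q-1)^2 := mul_nonneg (by linarith) (sq_nonneg _)
  have P2 : 0 ≤ q*(K*(C+lam+2*S) - (lam*C+1+2*S)) := mul_nonneg hq.le (by linarith)
  have step2 : (lam*C*q+1)*(q+1) ≤ K*((C*q+1)*(lam*q+1)) := by linarith
  have step1 : (lam*p+1)*(C*q+1) ≤ (lam*C*q+1)*(p+1) := by nlinarith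
  have h := mul_le_mul step1 step2 (by positivity) (by positivity)
  have hcancel : (lam*p+1)*(q+1) * ((C*q+1)*(lam*C*q+1)) ≤
      K*((p+1)*(lam*q+1)) * ((C*q+1)*(lam*C*q+1)) := by nlinarith [h]
  exact le_of_mul_le_mul_right hcancel (by positivity)

lemma twoblock (m M SP SQ TP TQ C K : ℝ) (hm : 0 < m) (hmM : m ≤ M)
    (hSP : 0 < SP) (hSQ : 0 < SQ) (hTP : 0 < TP) (hTQ : 0 < TQ) (hC : 1 ≤ C)
    (hcross : SP * TQ ≤ C * (SQ * TP)) (hK1 : 1 ≤ K)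
    (hK2 : M/m*C + 1 + 2*Real.sqrt (M/m*C) ≤ K*(C + M/m + 2*Real.sqrt (M/m*C))) :
    (M*SP + m*SQ)*(TP+TQ) ≤ K*((SP+SQ)*(M*TP+m*TQ)) := by
  have hlam : 1 ≤ M/m := (one_le_div hm).2 hmM
  have hpq : SP/SQ ≤ C*(TP/TQ) := by
    rw [← mul_div_assoc, div_le_div_iff₀ hSQ hTQ]
    nlinarith [hcross]
  have h := scalar_ineq (M/m) C K (SP/SQ) (TP/TQ) hlam hC (by positivity)
    (by positivity) hpq hK1 hK2
  have e1 : M*SP + m*SQ = (m*SQ)*((M/m)*(SP/SQ)+1) := by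
    field_simp
  have e2 : TP+TQ = TQ*((TP/TQ)+1) := by field_simp
  have e3 : SP+SQ = SQ*((SP/SQ)+1) := by field_simp
  have e4 : M*TP+m*TQ = (m*TQ)*((M/m)*(TP/TQ)+1) := by
    field_simp
  rw [e1, e2, e3, e4]
  calc (m*SQ)*((M/m)*(SP/SQ)+1)*(TQ*((TP/TQ)+1))
      = (m*SQ*TQ)*(((M/m)*(SP/SQ)+1)*((TP/TQ)+1)) := by ring
    _ ≤ (m*SQ*TQ)*(K*(((SP/SQ)+1)*((M/m)*(TP/TQ)+1))) :=
        mul_le_mul_of_nonneg_left h (by positivity)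
    _ = K*(SQ*((SP/SQ)+1)*((m*TQ)*((M/m)*(TP/TQ)+1))) := by ring

lemma reduce_extreme {ι : Type*} [DecidableEq ι] (Jf : Finset ι) (hne : Jf.Nonempty)
    (s t : ι → ℝ) (hs : ∀ j ∈ Jf, 0 < s j) (ht : ∀ j ∈ Jf, 0 < t j)
    (m M : ℝ) (hm : 0 < m) (r : ι → ℝ) (hr : ∀ j ∈ Jf, m ≤ r j ∧ r j ≤ M) :
    ∀ E : Finset ι, E ⊆ Jf →
    ∃ r' : ι → ℝ, (∀ j ∈ Jf, m ≤ r' j ∧ r' j ≤ M) ∧ (∀ j ∈ E, r' j = m ∨ r' j = M) ∧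
      (∑ j ∈ Jf, r j * s j) * (∑ j ∈ Jf, r' j * t j) ≤
        (∑ j ∈ Jf, r' j * s j) * (∑ j ∈ Jf, r j * t j) := by
  intro E
  induction E using Finset.induction_on with
  | empty =>
      intro _
      exact ⟨r, hr, by simp, le_of_eq (by ring)⟩
  | @insert a E ha ih =>
      intro hsub
      have haJf : a ∈ Jf := hsub (Finset.mem_insert_self a E)
      have hEJf : E ⊆ Jf := fun x hx => hsub (Finset.mem_insert_of_mem hx)
      obtain ⟨r', hr'b, hr'e, hr'le⟩ := ih hEJf
      have hmM : m ≤ M := le_trans (hr a haJf).1 (hr a haJf).2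
      set A := ∑ j ∈ Jf.erase a, r' j * s j with hA
      set Bt := ∑ j ∈ Jf.erase a, r' j * t j with hBt
      set y := if 0 ≤ s a * Bt - A * t a then M else m with hy
      have hym : m ≤ y ∧ y ≤ M := by
        rw [hy]; split <;> exact ⟨by linarith, by linarith⟩
      refine ⟨Function.update r' a y, ?_, ?_, ?_⟩
      · intro j hj
        by_cases hja : j = a
        · subst hja; rw [Function.update_self]; exact hym
        · rw [Function.update_of_ne hja]; exact hr'b j hj
      · intro j hj
        rcases Finset.mem_insert.1 hj with hja | hjE
        · subst hja
          rw [Function.update_self, hy]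
          split
          · right; rfl
          · left; rfl
        · have hja : j ≠ a := fun h => ha (h ▸ hjE)
          rw [Function.update_of_ne hja]
          exact hr'e j hjE
      · have eS' : ∑ j ∈ Jf, r' j * s j = r' a * s a + A :=
          (Finset.add_sum_erase Jf (fun j => r' j * s j) haJf).symm
        have eT' : ∑ j ∈ Jf, r' j * t j = r' a * t a + Bt :=
          (Finset.add_sum_erase Jf (fun j => r' j * t j) haJf).symm
        have eS'' : ∑ j ∈ Jf, Function.update r' a y j * s j = y * s a + A := by
          rw [← Finset.add_sum_erase Jf _ haJf, Function.update_self]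
          congr 1
          exact Finset.sum_congr rfl fun j hj => by
            rw [Function.update_of_ne (Finset.ne_of_mem_erase hj)]
        have eT'' : ∑ j ∈ Jf, Function.update r' a y j * t j = y * t a + Bt := by
          rw [← Finset.add_sum_erase Jf _ haJf, Function.update_self]
          congr 1
          exact Finset.sum_congr rfl fun j hj => by
            rw [Function.update_of_ne (Finset.ne_of_mem_erase hj)]
        have hx := hr'b a haJf
        have hsa := hs a haJf
        have hta := ht a haJf
        have hAnn : 0 ≤ A :=
          Finset.sum_nonneg fun j hj => le_of_lt (mul_pos
            (hm.trans_le (hr'b j (Finset.mem_of_mem_erase hj)).1)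
            (hs j (Finset.mem_of_mem_erase hj)))
        have hBnn : 0 ≤ Bt :=
          Finset.sum_nonneg fun j hj => le_of_lt (mul_pos
            (hm.trans_le (hr'b j (Finset.mem_of_mem_erase hj)).1)
            (ht j (Finset.mem_of_mem_erase hj)))
        have swap : (r' a * s a + A)*(y * t a + Bt) ≤ (y * s a + A)*(r' a * t a + Bt) := by
          rw [hy]
          split
          · rename_i hc
            nlinarith [mul_nonneg (sub_nonneg.2 hx.2) hc]
          · rename_i hc
            push_neg at hc
            nlinarith [mul_nonneg (sub_nonneg.2 hx.1) (le_of_lt (by linarith : (0:ℝ) < A * t a - s a * Bt))]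
        rw [eS'', eT'']
        rw [eS', eT'] at hr'le
        have d1pos : 0 < ∑ j ∈ Jf, r j * t j :=
          Finset.sum_pos (fun j hj => mul_pos (hm.trans_le (hr j hj).1) (ht j hj)) hne
        have d2pos : 0 < r' a * t a + Bt :=
          add_pos_of_pos_of_nonneg (mul_pos (hm.trans_le hx.1) hta) hBnn
        have d3nn : 0 ≤ y * t a + Bt :=
          le_of_lt (add_pos_of_pos_of_nonneg (mul_pos (hm.trans_le hym.1) hta) hBnn)
        apply le_of_mul_le_mul_right _ d2pos
        calc (∑ j ∈ Jf, r j * s j) * (y * t a + Bt) * (r' a * t a + Bt)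
            = ((∑ j ∈ Jf, r j * s j) * (r' a * t a + Bt)) * (y * t a + Bt) := by ring
          _ ≤ ((r' a * s a + A) * (∑ j ∈ Jf, r j * t j)) * (y * t a + Bt) :=
              mul_le_mul_of_nonneg_right hr'le d3nn
          _ = ((r' a * s a + A) * (y * t a + Bt)) * (∑ j ∈ Jf, r j * t j) := by ring
          _ ≤ ((y * s a + A) * (r' a * t a + Bt)) * (∑ j ∈ Jf, r j * t j) :=
              mul_le_mul_of_nonneg_right swap d1pos.le
          _ = (y * s a + A) * (∑ j ∈ Jf, r j * t j) * (r' a * t a + Bt) := by ring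

lemma core_contract {ι : Type*} [DecidableEq ι] (Jf : Finset ι) (hne : Jf.Nonempty)
    (s t r : ι → ℝ) (hs : ∀ j ∈ Jf, 0 < s j) (ht : ∀ j ∈ Jf, 0 < t j)
    (m M C K : ℝ) (hm : 0 < m) (hr : ∀ j ∈ Jf, m ≤ r j ∧ r j ≤ M)
    (hC : 1 ≤ C) (hcross : ∀ j ∈ Jf, ∀ l ∈ Jf, s j * t l ≤ C * (s l * t j))
    (hK1 : 1 ≤ K)
    (hK2 : M/m*C + 1 + 2*Real.sqrt (M/m*C) ≤ K*(C + M/m + 2*Real.sqrt (M/m*C))) :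
    (∑ j ∈ Jf, r j * s j) * (∑ j ∈ Jf, t j) ≤
      K * ((∑ j ∈ Jf, s j) * (∑ j ∈ Jf, r j * t j)) := by
  obtain ⟨j0, hj0⟩ := hne
  have hmM : m ≤ M := le_trans (hr j0 hj0).1 (hr j0 hj0).2
  obtain ⟨r', hr'b, hr'e, hr'le⟩ :=
    reduce_extreme Jf ⟨j0, hj0⟩ s t hs ht m M hm r hr Jf (le_refl _)
  -- two-block bound for r'
  classical
  set P := Jf.filter (fun j => r' j = M) with hP
  set Q := Jf.filter (fun j => ¬ r' j = M) with hQ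
  have hsplitS : ∑ j ∈ Jf, r' j * s j = M * (∑ j ∈ P, s j) + m * (∑ j ∈ Q, s j) := by
    rw [← Finset.sum_filter_add_sum_filter_not Jf (fun j => r' j = M) (fun j => r' j * s j),
      Finset.mul_sum, Finset.mul_sum]
    congr 1
    · exact Finset.sum_congr rfl fun j hj => by
        rw [(Finset.mem_filter.1 hj).2]
    · exact Finset.sum_congr rfl fun j hj => by
        have h1 := Finset.mem_filter.1 hj
        rcases hr'e j h1.1 with h | h
        · rw [h]
        · exact absurd h h1.2
  have hsplitT : ∑ j ∈ Jf, r' j * t j = M * (∑ j ∈ P, t j) + m * (∑ j ∈ Q, t j) := by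
    rw [← Finset.sum_filter_add_sum_filter_not Jf (fun j => r' j = M) (fun j => r' j * t j),
      Finset.mul_sum, Finset.mul_sum]
    congr 1
    · exact Finset.sum_congr rfl fun j hj => by
        rw [(Finset.mem_filter.1 hj).2]
    · exact Finset.sum_congr rfl fun j hj => by
        have h1 := Finset.mem_filter.1 hj
        rcases hr'e j h1.1 with h | h
        · rw [h]
        · exact absurd h h1.2
  have hsplS : ∑ j ∈ Jf, s j = (∑ j ∈ P, s j) + (∑ j ∈ Q, s j) :=
    (Finset.sum_filter_add_sum_filter_not Jf _ _).symm
  have hsplT : ∑ j ∈ Jf, t j = (∑ j ∈ P, t j) + (∑ j ∈ Q, t j) :=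
    (Finset.sum_filter_add_sum_filter_not Jf _ _).symm
  have key : (∑ j ∈ Jf, r' j * s j) * (∑ j ∈ Jf, t j) ≤
      K * ((∑ j ∈ Jf, s j) * (∑ j ∈ Jf, r' j * t j)) := by
    rcases Finset.eq_empty_or_nonempty P with hPe | hPne
    · -- all r' = m
      have hrm : ∀ j ∈ Jf, r' j = m := by
        intro j hj
        rcases hr'e j hj with h | h
        · exact h
        · exact absurd (Finset.mem_filter.2 ⟨hj, h⟩) (by rw [← hP, hPe]; simp)
      have e1 : ∑ j ∈ Jf, r' j * s j = m * ∑ j ∈ Jf, s j := by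
        rw [Finset.mul_sum]
        exact Finset.sum_congr rfl fun j hj => by rw [hrm j hj]
      have e2 : ∑ j ∈ Jf, r' j * t j = m * ∑ j ∈ Jf, t j := by
        rw [Finset.mul_sum]
        exact Finset.sum_congr rfl fun j hj => by rw [hrm j hj]
      rw [e1, e2]
      have hSpos : 0 < ∑ j ∈ Jf, s j := Finset.sum_pos hs ⟨j0, hj0⟩
      have hTpos : 0 < ∑ j ∈ Jf, t j := Finset.sum_pos ht ⟨j0, hj0⟩
      calc m * (∑ j ∈ Jf, s j) * (∑ j ∈ Jf, t j)
          = 1 * ((∑ j ∈ Jf, s j) * (m * (∑ j ∈ Jf, t j))) := by ring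
        _ ≤ K * ((∑ j ∈ Jf, s j) * (m * (∑ j ∈ Jf, t j))) := by
            apply mul_le_mul_of_nonneg_right hK1 (by positivity)
    · rcases Finset.eq_empty_or_nonempty Q with hQe | hQne
      · have hrM : ∀ j ∈ Jf, r' j = M := by
          intro j hj
          by_contra h
          exact absurd (Finset.mem_filter.2 ⟨hj, h⟩) (by rw [← hQ, hQe]; simp)
        have e1 : ∑ j ∈ Jf, r' j * s j = M * ∑ j ∈ Jf, s j := by
          rw [Finset.mul_sum]
          exact Finset.sum_congr rfl fun j hj => by rw [hrM j hj]
        have e2 : ∑ j ∈ Jf, r' j * t j = M * ∑ j ∈ Jf, t j := by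
          rw [Finset.mul_sum]
          exact Finset.sum_congr rfl fun j hj => by rw [hrM j hj]
        rw [e1, e2]
        have hSpos : 0 < ∑ j ∈ Jf, s j := Finset.sum_pos hs ⟨j0, hj0⟩
        have hTpos : 0 < ∑ j ∈ Jf, t j := Finset.sum_pos ht ⟨j0, hj0⟩
        have hMpos : 0 < M := hm.trans_le hmM
        calc M * (∑ j ∈ Jf, s j) * (∑ j ∈ Jf, t j)
            = 1 * ((∑ j ∈ Jf, s j) * (M * (∑ j ∈ Jf, t j))) := by ring
          _ ≤ K * ((∑ j ∈ Jf, s j) * (M * (∑ j ∈ Jf, t j))) := by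
              apply mul_le_mul_of_nonneg_right hK1 (by positivity)
      · -- both nonempty : twoblock
        have hPJ : P ⊆ Jf := Finset.filter_subset _ _
        have hQJ : Q ⊆ Jf := Finset.filter_subset _ _
        have hSP : 0 < ∑ j ∈ P, s j := Finset.sum_pos (fun j hj => hs j (hPJ hj)) hPne
        have hSQ : 0 < ∑ j ∈ Q, s j := Finset.sum_pos (fun j hj => hs j (hQJ hj)) hQne
        have hTP : 0 < ∑ j ∈ P, t j := Finset.sum_pos (fun j hj => ht j (hPJ hj)) hPne
        have hTQ : 0 < ∑ j ∈ Q, t j := Finset.sum_pos (fun j hj => ht j (hQJ hj)) hQne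
        have hcr : (∑ j ∈ P, s j) * (∑ j ∈ Q, t j) ≤
            C * ((∑ j ∈ Q, s j) * (∑ j ∈ P, t j)) := by
          rw [Finset.sum_mul_sum]
          have : C * ((∑ j ∈ Q, s j) * (∑ j ∈ P, t j)) =
              ∑ j ∈ P, ∑ l ∈ Q, C * (s l * t j) := by
            rw [Finset.sum_mul_sum]
            rw [Finset.mul_sum]
            rw [Finset.sum_comm]
            exact Finset.sum_congr rfl fun j hj => by
              rw [Finset.mul_sum]
          rw [this]
          apply Finset.sum_le_sum
          intro j hj
          apply Finset.sum_le_sum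
          intro l hl
          exact hcross j (hPJ hj) l (hQJ hl)
        have htb := twoblock m M (∑ j ∈ P, s j) (∑ j ∈ Q, s j) (∑ j ∈ P, t j)
          (∑ j ∈ Q, t j) C K hm hmM hSP hSQ hTP hTQ hC hcr hK1 hK2
        rw [hsplitS, hsplitT, hsplS, hsplT]
        exact htb
  -- combine reduction and key
  have hTpos : 0 < ∑ j ∈ Jf, t j := Finset.sum_pos ht ⟨j0, hj0⟩
  have hRTpos : 0 < ∑ j ∈ Jf, r j * t j :=
    Finset.sum_pos (fun j hj => mul_pos (hm.trans_le (hr j hj).1) (ht j hj)) ⟨j0, hj0⟩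
  have hR'Tpos : 0 < ∑ j ∈ Jf, r' j * t j :=
    Finset.sum_pos (fun j hj => mul_pos (hm.trans_le (hr'b j hj).1) (ht j hj)) ⟨j0, hj0⟩
  apply le_of_mul_le_mul_right _ hR'Tpos
  calc (∑ j ∈ Jf, r j * s j) * (∑ j ∈ Jf, t j) * (∑ j ∈ Jf, r' j * t j)
      = ((∑ j ∈ Jf, r j * s j) * (∑ j ∈ Jf, r' j * t j)) * (∑ j ∈ Jf, t j) := by ring
    _ ≤ ((∑ j ∈ Jf, r' j * s j) * (∑ j ∈ Jf, r j * t j)) * (∑ j ∈ Jf, t j) :=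
        mul_le_mul_of_nonneg_right hr'le hTpos.le
    _ = ((∑ j ∈ Jf, r' j * s j) * (∑ j ∈ Jf, t j)) * (∑ j ∈ Jf, r j * t j) := by ring
    _ ≤ (K * ((∑ j ∈ Jf, s j) * (∑ j ∈ Jf, r' j * t j))) * (∑ j ∈ Jf, r j * t j) :=
        mul_le_mul_of_nonneg_right key hRTpos.le
    _ = K * ((∑ j ∈ Jf, s j) * (∑ j ∈ Jf, r j * t j)) * (∑ j ∈ Jf, r' j * t j) := by ring

lemma bddAbove_deltaSet {d1 d2 : ℕ} (A : Matrix (Fin d1) (Fin d2) ℝ) :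
    BddAbove {x | ∃ i k j l, A i j ≠ 0 ∧ A k j ≠ 0 ∧ A i l ≠ 0 ∧ A k l ≠ 0 ∧
      x = Real.log (A i j * A k l / (A k j * A i l))} := by
  apply BddAbove.mono (s := {x | ∃ i k j l, A i j ≠ 0 ∧ A k j ≠ 0 ∧ A i l ≠ 0 ∧ A k l ≠ 0 ∧
      x = Real.log (A i j * A k l / (A k j * A i l))})
    (t := Set.range (fun p : (Fin d1 × Fin d1 × Fin d2 × Fin d2) =>
      Real.log (A p.1 p.2.2.1 * A p.2.1 p.2.2.2 / (A p.2.1 p.2.2.1 * A p.1 p.2.2.2))))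
  · rintro x ⟨i, k, j, l, _, _, _, _, rfl⟩
    exact ⟨(i, k, j, l), rfl⟩
  · exact (Set.finite_range _).bddAbove

lemma log_ratio_le (N D E : ℝ) (hN : 0 < N) (hD : 0 < D) (h : N ≤ Real.exp E * D) :
    Real.log (N / D) ≤ E := by
  rw [Real.log_le_iff_le_exp (div_pos hN hD), div_le_iff₀ hD]
  linarith

theorem delta_contraction {d1 d2 d3 : ℕ}
    (A : Matrix (Fin d1) (Fin d2) ℝ) (B : Matrix (Fin d2) (Fin d3) ℝ)
    (hA : ∀ i j, 0 ≤ A i j) (hB : ∀ i j, 0 ≤ B i j)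
    (hAne : A ≠ 0) (hH : satH A) (hABne : A * B ≠ 0) :
    deltaC (A * B) ≤ deltaC A * ENNReal.ofReal (tauC B) := by
  obtain ⟨I, J, hIne, hJne, hIJ⟩ := hH
  -- characterization of nonzero entries of A*B
  have hABnz : ∀ i mm, (A*B) i mm ≠ 0 ↔ ∃ j, A i j ≠ 0 ∧ B j mm ≠ 0 := by
    intro i mm
    rw [Matrix.mul_apply]
    constructor
    · intro h
      by_contra hc
      push_neg at hc
      apply h
      apply Finset.sum_eq_zero
      intro j _
      rcases eq_or_ne (A i j) 0 with h0 | h0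
      · rw [h0, zero_mul]
      · rw [hc j h0, mul_zero]
    · rintro ⟨j, hAj, hBj⟩ h
      exact (mul_ne_zero hAj hBj)
        ((Finset.sum_eq_zero_iff_of_nonneg
          (fun l _ => mul_nonneg (hA i l) (hB l mm))).1 h j (Finset.mem_univ j))
  have hABpos : ∀ i mm, (A*B) i mm ≠ 0 → 0 < (A*B) i mm := by
    intro i mm h
    refine lt_of_le_of_ne ?_ (Ne.symm h)
    rw [Matrix.mul_apply]
    exact Finset.sum_nonneg fun j _ => mul_nonneg (hA i j) (hB j mm)
  have hABex : ∃ i mm, (A*B) i mm ≠ 0 := by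
    by_contra hc
    push_neg at hc
    apply hABne
    ext i mm
    simpa using hc i mm
  have hH' : satH A := ⟨I, J, hIne, hJne, hIJ⟩
  -- satH (A*B)
  have hHAB : satH (A*B) := by
    refine ⟨I, {mm | ∃ j, j ∈ J ∧ B j mm ≠ 0}, hIne, ?_, ?_⟩
    · obtain ⟨i0, mm0, h0⟩ := hABex
      obtain ⟨j, hAj, hBj⟩ := (hABnz i0 mm0).1 h0
      exact ⟨mm0, j, ((hIJ i0 j).1 hAj).2, hBj⟩
    · intro i mm
      rw [hABnz]
      constructor
      · rintro ⟨j, hAj, hBj⟩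
        obtain ⟨hi, hj⟩ := (hIJ i j).1 hAj
        exact ⟨hi, j, hj, hBj⟩
      · rintro ⟨hi, j, hj, hBj⟩
        exact ⟨j, (hIJ i j).2 ⟨hi, hj⟩, hBj⟩
  -- delta of A
  set SA := {x | ∃ i k j l, A i j ≠ 0 ∧ A k j ≠ 0 ∧ A i l ≠ 0 ∧ A k l ≠ 0 ∧
      x = Real.log (A i j * A k l / (A k j * A i l))} with hSA
  set δA := sSup SA with hδA
  have hSAbdd : BddAbove SA := bddAbove_deltaSet A
  have hApos : ∀ i j, i ∈ I → j ∈ J → 0 < A i j := by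
    intro i j hi hj
    exact lt_of_le_of_ne (hA i j) (Ne.symm ((hIJ i j).2 ⟨hi, hj⟩))
  have hSA0 : (0:ℝ) ∈ SA := by
    obtain ⟨i0, hi0⟩ := hIne
    obtain ⟨j0, hj0⟩ := hJne
    have hne := (hIJ i0 j0).2 ⟨hi0, hj0⟩
    refine ⟨i0, i0, j0, j0, hne, hne, hne, hne, ?_⟩
    rw [div_self (mul_ne_zero hne hne), Real.log_one]
  have hδA0 : 0 ≤ δA := le_csSup hSAbdd hSA0
  have hAratio : ∀ i k j l, i ∈ I → k ∈ I → j ∈ J → l ∈ J →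
      A i j * A k l ≤ Real.exp δA * (A k j * A i l) := by
    intro i k j l hi hk hj hl
    have h1 := hApos i j hi hj
    have h2 := hApos k j hk hj
    have h3 := hApos i l hi hl
    have h4 := hApos k l hk hl
    have hmem : Real.log (A i j * A k l / (A k j * A i l)) ∈ SA :=
      ⟨i, k, j, l, h1.ne', h2.ne', h3.ne', h4.ne', rfl⟩
    have hle : Real.log (A i j * A k l / (A k j * A i l)) ≤ δA := le_csSup hSAbdd hmem
    have hdpos : 0 < A k j * A i l := mul_pos h2 h3
    have := (Real.log_le_iff_le_exp (div_pos (mul_pos h1 h4) hdpos)).1 hle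
    rw [div_le_iff₀ hdpos] at this
    linarith
  have hdA : deltaC A = ENNReal.ofReal δA := by
    rw [deltaC, if_pos hH']
  -- delta of A*B
  set SAB := {x | ∃ i k j l, (A*B) i j ≠ 0 ∧ (A*B) k j ≠ 0 ∧ (A*B) i l ≠ 0 ∧ (A*B) k l ≠ 0 ∧
      x = Real.log ((A*B) i j * (A*B) k l / ((A*B) k j * (A*B) i l))} with hSAB
  have hdAB : deltaC (A*B) = ENNReal.ofReal (sSup SAB) := by
    rw [deltaC, if_pos hHAB]
  by_cases hHB : satH B
  · -- hard case
    obtain ⟨IB, JB, hIBne, hJBne, hIJB⟩ := hHB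
    set SB := {x | ∃ i k j l, B i j ≠ 0 ∧ B k j ≠ 0 ∧ B i l ≠ 0 ∧ B k l ≠ 0 ∧
        x = Real.log (B i j * B k l / (B k j * B i l))} with hSB
    set δB := sSup SB with hδB
    have hSBbdd : BddAbove SB := bddAbove_deltaSet B
    have hBpos : ∀ i j, i ∈ IB → j ∈ JB → 0 < B i j := by
      intro i j hi hj
      exact lt_of_le_of_ne (hB i j) (Ne.symm ((hIJB i j).2 ⟨hi, hj⟩))
    have hSB0 : (0:ℝ) ∈ SB := by
      obtain ⟨i0, hi0⟩ := hIBne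
      obtain ⟨j0, hj0⟩ := hJBne
      have hne := (hIJB i0 j0).2 ⟨hi0, hj0⟩
      refine ⟨i0, i0, j0, j0, hne, hne, hne, hne, ?_⟩
      rw [div_self (mul_ne_zero hne hne), Real.log_one]
    have hδB0 : 0 ≤ δB := le_csSup hSBbdd hSB0
    have hBratio : ∀ j l a b, j ∈ IB → l ∈ IB → a ∈ JB → b ∈ JB →
        B j a * B l b ≤ Real.exp δB * (B l a * B j b) := by
      intro j l a b hj hl ha hb
      have h1 := hBpos j a hj ha
      have h2 := hBpos l a hl ha
      have h3 := hBpos j b hj hb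
      have h4 := hBpos l b hl hb
      have hmem : Real.log (B j a * B l b / (B l a * B j b)) ∈ SB :=
        ⟨j, l, a, b, h1.ne', h2.ne', h3.ne', h4.ne', rfl⟩
      have hle := le_csSup hSBbdd hmem
      have hdpos : 0 < B l a * B j b := mul_pos h2 h3
      have := (Real.log_le_iff_le_exp (div_pos (mul_pos h1 h4) hdpos)).1 hle
      rw [div_le_iff₀ hdpos] at this
      linarith
    have hHB' : satH B := ⟨IB, JB, hIBne, hJBne, hIJB⟩
    have hdB : deltaC B = ENNReal.ofReal δB := by
      rw [deltaC, if_pos hHB']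
    have htau : tauC B = Real.tanh (δB/4) := by
      rw [tauC, if_neg (by rw [hdB]; exact ENNReal.ofReal_ne_top), hdB,
        ENNReal.toReal_ofReal hδB0]
    have htanh0 : 0 ≤ Real.tanh (δB/4) := tanh_nonneg' _ (by linarith)
    rw [hdAB, hdA, htau, ← ENNReal.ofReal_mul hδA0]
    apply ENNReal.ofReal_le_ofReal
    apply Real.sSup_le _ (mul_nonneg hδA0 htanh0)
    rintro x ⟨i, k, a, b, h1, h2, h3, h4, rfl⟩
    -- main entry-wise bound
    have hiI : i ∈ I := by
      obtain ⟨j, hAj, _⟩ := (hABnz i a).1 h1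
      exact ((hIJ i j).1 hAj).1
    have hkI : k ∈ I := by
      obtain ⟨j, hAj, _⟩ := (hABnz k a).1 h2
      exact ((hIJ k j).1 hAj).1
    have haJB : a ∈ JB := by
      obtain ⟨j, _, hBj⟩ := (hABnz k a).1 h2
      exact ((hIJB j a).1 hBj).2
    have hbJB : b ∈ JB := by
      obtain ⟨j, _, hBj⟩ := (hABnz k b).1 h4
      exact ((hIJB j b).1 hBj).2
    set Jf : Finset (Fin d2) := Finset.univ.filter (fun j => A k j ≠ 0 ∧ B j a ≠ 0) with hJf
    have hJfmem : ∀ j, j ∈ Jf ↔ (A k j ≠ 0 ∧ B j a ≠ 0) := by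
      intro j
      simp [hJf]
    have hJfne : Jf.Nonempty := by
      obtain ⟨j, hAj, hBj⟩ := (hABnz k a).1 h2
      exact ⟨j, (hJfmem j).2 ⟨hAj, hBj⟩⟩
    -- facts on Jf
    have hjJ : ∀ j ∈ Jf, j ∈ J := fun j hj => ((hIJ k j).1 ((hJfmem j).1 hj).1).2
    have hjIB : ∀ j ∈ Jf, j ∈ IB := fun j hj => ((hIJB j a).1 ((hJfmem j).1 hj).2).1
    set s : Fin d2 → ℝ := fun j => A k j * B j a with hs'
    set t : Fin d2 → ℝ := fun j => A k j * B j b with ht'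
    set r : Fin d2 → ℝ := fun j => A i j / A k j with hr'
    have hspos : ∀ j ∈ Jf, 0 < s j := fun j hj =>
      mul_pos (hApos k j hkI (hjJ j hj)) (hBpos j a (hjIB j hj) haJB)
    have htpos : ∀ j ∈ Jf, 0 < t j := fun j hj =>
      mul_pos (hApos k j hkI (hjJ j hj)) (hBpos j b (hjIB j hj) hbJB)
    have hrpos : ∀ j ∈ Jf, 0 < r j := fun j hj =>
      div_pos (hApos i j hiI (hjJ j hj)) (hApos k j hkI (hjJ j hj))
    -- sum identities
    have hvanish1 : ∀ j, j ∉ Jf → A i j * B j a = 0 := by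
      intro j hj
      rw [hJfmem] at hj
      push_neg at hj
      rcases eq_or_ne (A k j) 0 with h0 | h0
      · have : j ∉ J := fun hjJ' => ((hIJ k j).2 ⟨hkI, hjJ'⟩) h0
        have : A i j = 0 := by
          by_contra hc
          exact this ((hIJ i j).1 hc).2
        rw [this, zero_mul]
      · rw [hj h0, mul_zero]
    have hvanish2 : ∀ j, j ∉ Jf → A k j * B j a = 0 := by
      intro j hj
      rw [hJfmem] at hj
      push_neg at hj
      rcases eq_or_ne (A k j) 0 with h0 | h0
      · rw [h0, zero_mul]
      · rw [hj h0, mul_zero]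
    have hBab : ∀ j, B j a = 0 → B j b = 0 := by
      intro j h0
      by_contra hc
      have hjIB' : j ∈ IB := ((hIJB j b).1 hc).1
      exact ((hIJB j a).2 ⟨hjIB', haJB⟩) h0
    have hvanish3 : ∀ j, j ∉ Jf → A i j * B j b = 0 := by
      intro j hj
      rw [hJfmem] at hj
      push_neg at hj
      rcases eq_or_ne (A k j) 0 with h0 | h0
      · have : A i j = 0 := by
          by_contra hc
          exact ((hIJ k j).2 ⟨hkI, ((hIJ i j).1 hc).2⟩) h0
        rw [this, zero_mul]
      · rw [hBab j (hj h0), mul_zero]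
    have hvanish4 : ∀ j, j ∉ Jf → A k j * B j b = 0 := by
      intro j hj
      rw [hJfmem] at hj
      push_neg at hj
      rcases eq_or_ne (A k j) 0 with h0 | h0
      · rw [h0, zero_mul]
      · rw [hBab j (hj h0), mul_zero]
    have eq1 : (A*B) i a = ∑ j ∈ Jf, r j * s j := by
      rw [Matrix.mul_apply]
      rw [← Finset.sum_subset (Finset.subset_univ Jf) (fun j _ hj => hvanish1 j hj)]
      apply Finset.sum_congr rfl
      intro j hj
      have hAk := ((hJfmem j).1 hj).1
      rw [hr', hs']
      field_simp
    have eq2 : (A*B) k a = ∑ j ∈ Jf, s j := by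
      rw [Matrix.mul_apply]
      rw [← Finset.sum_subset (Finset.subset_univ Jf) (fun j _ hj => hvanish2 j hj)]
    have eq3 : (A*B) i b = ∑ j ∈ Jf, r j * t j := by
      rw [Matrix.mul_apply]
      rw [← Finset.sum_subset (Finset.subset_univ Jf) (fun j _ hj => hvanish3 j hj)]
      apply Finset.sum_congr rfl
      intro j hj
      have hAk := ((hJfmem j).1 hj).1
      rw [hr', ht']
      field_simp
    have eq4 : (A*B) k b = ∑ j ∈ Jf, t j := by
      rw [Matrix.mul_apply]
      rw [← Finset.sum_subset (Finset.subset_univ Jf) (fun j _ hj => hvanish4 j hj)]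
    -- bounds on r
    set m := Jf.inf' hJfne r with hm'
    set M := Jf.sup' hJfne r with hM'
    have hm : 0 < m := by
      rw [hm', Finset.lt_inf'_iff]
      exact hrpos
    have hrb : ∀ j ∈ Jf, m ≤ r j ∧ r j ≤ M :=
      fun j hj => ⟨Finset.inf'_le r hj, Finset.le_sup' r hj⟩
    obtain ⟨jM, hjM, hjMe⟩ := Finset.exists_mem_eq_sup' hJfne r
    obtain ⟨jm, hjm, hjme⟩ := Finset.exists_mem_eq_inf' hJfne r
    have hmM : m ≤ M := le_trans (hrb jM hjM).1 (hrb jM hjM).2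
    have hlam1 : 1 ≤ M/m := (one_le_div hm).2 hmM
    have hlamD : M/m ≤ Real.exp δA := by
      have e : M/m = A i jM * A k jm / (A k jM * A i jm) := by
        rw [hM', hm', hjMe, hjme]
        simp only [hr']
        field_simp
      rw [e]
      have hrat := hAratio i k jM jm hiI hkI (hjJ jM hjM) (hjJ jm hjm)
      have hdpos : 0 < A k jM * A i jm :=
        mul_pos (hApos k jM hkI (hjJ jM hjM)) (hApos i jm hiI (hjJ jm hjm))
      rw [div_le_iff₀ hdpos]
      linarith
    set C := Real.exp δB with hC'
    set K := Real.exp (δA * Real.tanh (δB/4)) with hK'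
    have hC1 : 1 ≤ C := Real.one_le_exp hδB0
    have hK1 : 1 ≤ K := Real.one_le_exp (mul_nonneg hδA0 htanh0)
    have hcross : ∀ j ∈ Jf, ∀ l ∈ Jf, s j * t l ≤ C * (s l * t j) := by
      intro j hj l hl
      have hrat := hBratio j l a b (hjIB j hj) (hjIB l hl) haJB hbJB
      have hAkj := hApos k j hkI (hjJ j hj)
      have hAkl := hApos k l hkI (hjJ l hl)
      rw [hs', ht', hC']
      calc A k j * B j a * (A k l * B l b) = (A k j * A k l) * (B j a * B l b) := by ring
        _ ≤ (A k j * A k l) * (Real.exp δB * (B l a * B j b)) :=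
            mul_le_mul_of_nonneg_left hrat (by positivity)
        _ = Real.exp δB * (A k l * B l a * (A k j * B j b)) := by ring
    have hK2 : M/m*C + 1 + 2*Real.sqrt (M/m*C) ≤ K*(C + M/m + 2*Real.sqrt (M/m*C)) := by
      have := coeff_ineq (M/m) δB δA hδB0 hδA0 hlam1 hlamD
      rw [hC', hK']
      linarith
    have hmain := core_contract Jf hJfne s t r hspos htpos m M C K hm hrb hC1 hcross hK1 hK2
    rw [← eq1, ← eq2, ← eq3, ← eq4] at hmain
    have hN : 0 < (A*B) i a * (A*B) k b := mul_pos (hABpos i a h1) (hABpos k b h4)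
    have hD : 0 < (A*B) k a * (A*B) i b := mul_pos (hABpos k a h2) (hABpos i b h3)
    apply log_ratio_le _ _ _ hN hD
    rw [hK'] at hmain
    linarith
  · -- easy case : tau B = 1
    have hdB : deltaC B = ⊤ := by
      rw [deltaC, if_neg hHB]
    have htau : tauC B = 1 := by
      rw [tauC, if_pos hdB]
    rw [hdAB, hdA, htau, ENNReal.ofReal_one, mul_one]
    apply ENNReal.ofReal_le_ofReal
    apply Real.sSup_le _ hδA0
    rintro x ⟨i, k, a, b, h1, h2, h3, h4, rfl⟩
    have hiI : i ∈ I := by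
      obtain ⟨j, hAj, _⟩ := (hABnz i a).1 h1
      exact ((hIJ i j).1 hAj).1
    have hkI : k ∈ I := by
      obtain ⟨j, hAj, _⟩ := (hABnz k a).1 h2
      exact ((hIJ k j).1 hAj).1
    have hN : 0 < (A*B) i a * (A*B) k b := mul_pos (hABpos i a h1) (hABpos k b h4)
    have hD : 0 < (A*B) k a * (A*B) i b := mul_pos (hABpos k a h2) (hABpos i b h3)
    apply log_ratio_le _ _ _ hN hD
    -- expand as double sums and bound termwise
    have expand : ∀ (u v : Fin d1) (c e : Fin d3),
        (A*B) u c * (A*B) v e = ∑ j, ∑ l, A u j * B j c * (A v l * B l e) := by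
      intro u v c e
      rw [Matrix.mul_apply, Matrix.mul_apply, Finset.sum_mul_sum]
    rw [expand, expand, Finset.mul_sum]
    apply Finset.sum_le_sum
    intro j _
    rw [Finset.mul_sum]
    apply Finset.sum_le_sum
    intro l _
    rcases eq_or_ne (A i j) 0 with h0 | h0
    · rw [h0]
      have : (0:ℝ) * B j a * (A k l * B l b) = 0 := by ring
      rw [this]
      have h2' := hA k j
      have h3' := hA i l
      have h4' := hB j a
      have h5' := hB l b
      positivity
    rcases eq_or_ne (A k l) 0 with h00 | h00
    · rw [h00]
      have : A i j * B j a * ((0:ℝ) * B l b) = 0 := by ring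
      rw [this]
      have h2' := hA k j
      have h3' := hA i l
      have h4' := hB j a
      have h5' := hB l b
      positivity
    have hjJ : j ∈ J := ((hIJ i j).1 h0).2
    have hlJ : l ∈ J := ((hIJ k l).1 h00).2
    have hrat := hAratio i k j l hiI hkI hjJ hlJ
    calc A i j * B j a * (A k l * B l b) = (A i j * A k l) * (B j a * B l b) := by ring
      _ ≤ (Real.exp δA * (A k j * A i l)) * (B j a * B l b) :=
          mul_le_mul_of_nonneg_right hrat (mul_nonneg (hB j a) (hB l b))
      _ = Real.exp δA * (A k j * B j a * (A i l * B l b)) := by ring
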